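/- Given effective noise variance N(β, c) = |β|² + S||β g + E* c - a||² (with S > 0, a ∈ ℂ^L, g orthogonal to columns of E*), the maximum over β, c of log⁺(S/N(β,c)) equals log⁺(1/(a* V a)) where V = I - gg*/(1/S + ||g||²) - E*(EE*)⁻¹E, provided a* V a > 0. -/

import Mathlib

open Matrix

noncomputable def nsq {L : ℕ} (v : Fin L → ℂ) : ℝ := ∑ i, ‖v i‖ ^ 2

/-- log⁺(x) = max(log x, 0). -/
noncomputable def logPlus (x : ℝ) : ℝ := max (Real.log x) 0

/-- Effective noise variance N(β, c) = |β|² + S‖β g + E* c - a‖². -/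
noncomputable def N16 {k L : ℕ} (S : ℝ) (g a : Fin L → ℂ)
    (E : Matrix (Fin k) (Fin L) ℂ) (β : ℂ) (c : Fin k → ℂ) : ℝ :=
  ‖β‖ ^ 2 + S * nsq (β • g + Eᴴ *ᵥ c - a)

lemma nsq_eq_re {L : ℕ} (v : Fin L → ℂ) : nsq v = (star v ⬝ᵥ v).re := by
  simp only [nsq, dotProduct, Complex.re_sum]
  refine Finset.sum_congr rfl fun i _ => ?_
  simp only [Pi.star_apply, Complex.star_def, Complex.mul_re, Complex.conj_re, Complex.conj_im]
  rw [← pow_two, Complex.sq_norm, Complex.normSq_apply]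
  ring

lemma nsq_nonneg {L : ℕ} (v : Fin L → ℂ) : 0 ≤ nsq v :=
  Finset.sum_nonneg fun i _ => by positivity

lemma dot_conjT {k L : ℕ} (E : Matrix (Fin k) (Fin L) ℂ) (x : Fin L → ℂ) (c : Fin k → ℂ) :
    star x ⬝ᵥ (Eᴴ *ᵥ c) = star (E *ᵥ x) ⬝ᵥ c := by
  rw [star_mulVec, dotProduct_mulVec]

lemma vecMulVec_mv {L : ℕ} (g a : Fin L → ℂ) :
    (vecMulVec g (star g)) *ᵥ a = (star g ⬝ᵥ a) • g := by
  funext j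
  simp only [mulVec, vecMulVec_apply, dotProduct, Pi.smul_apply, smul_eq_mul, Pi.star_apply]
  rw [Finset.sum_mul]
  refine Finset.sum_congr rfl fun i _ => ?_
  ring

lemma star_dot_self {L : ℕ} (g : Fin L → ℂ) : star g ⬝ᵥ g = ((nsq g : ℝ) : ℂ) := by
  simp only [nsq, dotProduct, Pi.star_apply]
  push_cast
  refine Finset.sum_congr rfl fun i _ => ?_
  rw [Complex.star_def, mul_comm, Complex.mul_conj]
  norm_cast
  rw [Complex.normSq_eq_norm_sq]

lemma logPlus_mono {x y : ℝ} (hx : 0 < x) (hxy : x ≤ y) : logPlus x ≤ logPlus y :=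
  max_le_max (Real.log_le_log hx hxy) le_rfl

/-- The maximum over β, c of log⁺(S/N(β,c)) equals log⁺(1/(a* V a)), where
V = I - gg*/(1/S + ‖g‖²) - E*(EE*)⁻¹E and g = (I - E*(EE*)⁻¹E)h,
provided a* V a > 0. -/
theorem stmt16 {k L : ℕ} {S : ℝ} (hS : 0 < S) (a h : Fin L → ℂ)
    (E : Matrix (Fin k) (Fin L) ℂ) [Invertible (E * Eᴴ)]
    (g : Fin L → ℂ) (hg : g = (1 - Eᴴ * (E * Eᴴ)⁻¹ * E) *ᵥ h)
    (V : Matrix (Fin L) (Fin L) ℂ)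
    (hV : V = 1 - (((1 / S + nsq g : ℝ)) : ℂ)⁻¹ • vecMulVec g (star g)
        - Eᴴ * (E * Eᴴ)⁻¹ * E)
    (hpos : 0 < (star a ⬝ᵥ (V *ᵥ a)).re) :
    IsGreatest
      {x : ℝ | ∃ (β : ℂ) (c : Fin k → ℂ), x = logPlus (S / N16 S g a E β c)}
      (logPlus (1 / (star a ⬝ᵥ (V *ᵥ a)).re)) := by
  classical
  set q : ℝ := (star a ⬝ᵥ (V *ᵥ a)).re with hqdef
  set G : ℝ := nsq g with hGdef
  set t : ℝ := 1 / S + G with htdef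
  have hG0 : 0 ≤ G := nsq_nonneg g
  have ht0 : 0 < t := by rw [htdef]; positivity
  have htne : t ≠ 0 := ht0.ne'
  have hSne : S ≠ 0 := hS.ne'
  set w : ℂ := star g ⬝ᵥ a with hwdef
  set W : ℝ := Complex.normSq w with hWdef
  set c₀ : Fin k → ℂ := (E * Eᴴ)⁻¹ *ᵥ (E *ᵥ a) with hc₀
  set β₀ : ℂ := ((t⁻¹ : ℝ) : ℂ) * w with hβ₀
  set m : Fin L → ℂ := β₀ • g + Eᴴ *ᵥ c₀ - a with hmdef
  set ρ : ℂ := star a ⬝ᵥ (Eᴴ *ᵥ c₀) with hρdef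
  -- matrix facts
  have hEg : E *ᵥ g = 0 := by
    rw [hg, mulVec_mulVec, Matrix.mul_sub, Matrix.mul_one, ← Matrix.mul_assoc,
      ← Matrix.mul_assoc E Eᴴ, Matrix.mul_inv_of_invertible, Matrix.one_mul, sub_self, zero_mulVec]
  have hEEc : E *ᵥ (Eᴴ *ᵥ c₀) = E *ᵥ a := by
    rw [hc₀, mulVec_mulVec, mulVec_mulVec, Matrix.mul_inv_of_invertible, one_mulVec]
  have hEm : E *ᵥ m = 0 := by
    rw [hmdef, mulVec_sub, mulVec_add, mulVec_smul, hEg, hEEc]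
    simp
  -- scalar facts
  have hgg : star g ⬝ᵥ g = ((G : ℝ) : ℂ) := star_dot_self g
  have haa : star a ⬝ᵥ a = ((nsq a : ℝ) : ℂ) := star_dot_self a
  have hag : star a ⬝ᵥ g = star w := by rw [hwdef, star_dotProduct]
  have hgm : star g ⬝ᵥ m = β₀ * (G : ℂ) - w := by
    rw [hmdef, dotProduct_sub, dotProduct_add, dotProduct_smul, hgg, dot_conjT, hEg, star_zero,
      zero_dotProduct, add_zero, ← hwdef, smul_eq_mul]
  have ham : star a ⬝ᵥ m = β₀ * star w + ρ - ((nsq a : ℝ) : ℂ) := by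
    rw [hmdef, dotProduct_sub, dotProduct_add, dotProduct_smul, hag, haa, ← hρdef, smul_eq_mul]
  have hmg : star m ⬝ᵥ g = star (β₀ * (G : ℂ) - w) := by rw [star_dotProduct, hgm]
  have hma : star m ⬝ᵥ a = star (β₀ * star w + ρ - ((nsq a : ℝ) : ℂ)) := by
    rw [star_dotProduct, ham]
  have hmE : ∀ e : Fin k → ℂ, star m ⬝ᵥ (Eᴴ *ᵥ e) = 0 := fun e => by
    rw [dot_conjT, hEm, star_zero, zero_dotProduct]
  have hmm : star m ⬝ᵥ m
      = β₀ * star (β₀ * (G : ℂ) - w) - star (β₀ * star w + ρ - ((nsq a : ℝ) : ℂ)) := by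
    nth_rewrite 2 [hmdef]
    rw [dotProduct_sub, dotProduct_add, dotProduct_smul, hmg, hmE, hma, add_zero, smul_eq_mul]
  -- value of q
  have hPa : (Eᴴ * (E * Eᴴ)⁻¹ * E) *ᵥ a = Eᴴ *ᵥ c₀ := by
    rw [hc₀, mulVec_mulVec, mulVec_mulVec]
  have hVa : star a ⬝ᵥ (V *ᵥ a) = ((nsq a : ℝ) : ℂ) - ((t : ℂ))⁻¹ * (w * star w) - ρ := by
    rw [hV, sub_mulVec, sub_mulVec, one_mulVec, smul_mulVec, vecMulVec_mv, ← hwdef, hPa,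
      dotProduct_sub, dotProduct_sub, haa, dotProduct_smul, dotProduct_smul, hag, ← hρdef,
      smul_eq_mul, smul_eq_mul]
  have hq : q = nsq a - t⁻¹ * W - ρ.re := by
    rw [hqdef, hVa, Complex.star_def, Complex.mul_conj, ← hWdef]
    push_cast
    simp
  have hW' : W = w.re * w.re + w.im * w.im := by rw [hWdef, Complex.normSq_apply]
  have hNopt : N16 S g a E β₀ c₀ = S * q := by
    have h1 : β₀ • g + Eᴴ *ᵥ c₀ - a = m := hmdef.symm
    simp only [N16, h1]
    rw [nsq_eq_re, hmm, hq, Complex.sq_norm, hβ₀]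
    simp only [Complex.star_def, _root_.map_mul, _root_.map_sub, _root_.map_add, Complex.conj_ofReal,
      Complex.sub_re, Complex.add_re, Complex.mul_re, Complex.mul_im, Complex.sub_im,
      Complex.add_im, Complex.ofReal_re, Complex.ofReal_im, Complex.conj_re, Complex.conj_im,
      Complex.normSq_mul, Complex.normSq_ofReal, Complex.normSq_apply]
    rw [hW', htdef]
    field_simp
    ring
  have hNopt' : S * q = Complex.normSq β₀ + S * (star m ⬝ᵥ m).re := by
    rw [← hNopt]
    simp only [N16, hmdef.symm]
    rw [nsq_eq_re, Complex.sq_norm]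
  have hst : S * t = 1 + S * G := by rw [htdef]; field_simp
  have hNge : ∀ β c, S * q ≤ N16 S g a E β c := by
    intro β c
    set δ : ℂ := β - β₀ with hδ
    set e : Fin k → ℂ := c - c₀ with he
    obtain ⟨v, hv⟩ : ∃ v, v = δ • g + Eᴴ *ᵥ e := ⟨_, rfl⟩
    have hβeq : β = β₀ + δ := by rw [hδ]; ring
    have hceq : c = c₀ + e := by rw [he]; abel
    have hsplit : β • g + Eᴴ *ᵥ c - a = m + v := by
      rw [hβeq, hceq, mulVec_add, add_smul, hmdef, hv]
      abel
    have hmv : star m ⬝ᵥ v = δ * star (β₀ * (G : ℂ) - w) := by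
      rw [hv, dotProduct_add, dotProduct_smul, hmg, hmE, add_zero, smul_eq_mul]
    have hvm : star v ⬝ᵥ m = star (star m ⬝ᵥ v) := star_dotProduct v m
    have hvv : 0 ≤ (star v ⬝ᵥ v).re := by rw [← nsq_eq_re]; exact nsq_nonneg v
    have huu : nsq (β • g + Eᴴ *ᵥ c - a)
        = (star m ⬝ᵥ m).re + 2 * (star m ⬝ᵥ v).re + (star v ⬝ᵥ v).re := by
      rw [hsplit, nsq_eq_re, star_add, add_dotProduct, dotProduct_add, dotProduct_add, hvm]
      simp only [Complex.add_re, Complex.star_def, Complex.conj_re]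
      ring
    have hβn : ‖β‖ ^ 2
        = Complex.normSq β₀ + Complex.normSq δ + 2 * (β₀ * star δ).re := by
      rw [hβeq, Complex.sq_norm, Complex.star_def, Complex.normSq_add]
    have ht1r : t⁻¹ + S * (t⁻¹ * G) - S = 0 := by
      linear_combination (-t⁻¹) * hst + S * (inv_mul_cancel₀ htne)
    have ht1 : ((t⁻¹ + S * (t⁻¹ * G) - S : ℝ) : ℂ) = 0 := by rw [ht1r]; simp
    have hzero : δ * star β₀ + (S : ℂ) * (δ * star (β₀ * (G : ℂ) - w)) = 0 := by
      rw [hβ₀]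
      simp only [Complex.star_def, _root_.map_mul, _root_.map_sub, Complex.conj_ofReal]
      push_cast at ht1 ⊢
      linear_combination (δ * (starRingEnd ℂ) w) * ht1
    have hcross : (β₀ * star δ).re + S * (δ * star (β₀ * (G : ℂ) - w)).re = 0 := by
      have h2 := congrArg Complex.re hzero
      rw [Complex.add_re, Complex.re_ofReal_mul, Complex.zero_re] at h2
      have h1 : (β₀ * star δ).re = (δ * star β₀).re := by
        rw [show β₀ * star δ = star (δ * star β₀) by rw [star_mul', star_star, mul_comm],
          Complex.star_def, Complex.conj_re]
      rw [h1]
      linarith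
    simp only [N16]
    rw [huu, hβn, hmv, hNopt']
    have hvS : 0 ≤ S * (star v ⬝ᵥ v).re := mul_nonneg hS.le hvv
    have hexp : S * ((star m ⬝ᵥ m).re + 2 * (δ * star (β₀ * (G : ℂ) - w)).re
          + (star v ⬝ᵥ v).re)
        = S * (star m ⬝ᵥ m).re + 2 * (S * (δ * star (β₀ * (G : ℂ) - w)).re)
          + S * (star v ⬝ᵥ v).re := by ring
    rw [hexp]
    linarith [Complex.normSq_nonneg δ, hcross, hvS]
  -- final assembly
  have hq0 : 0 < S * q := mul_pos hS hpos
  constructor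
  · refine ⟨β₀, c₀, ?_⟩
    rw [hNopt]
    congr 1
    field_simp
  · rintro x ⟨β, c, rfl⟩
    have hN : 0 < N16 S g a E β c := lt_of_lt_of_le hq0 (hNge β c)
    refine logPlus_mono (div_pos hS hN) ?_
    calc S / N16 S g a E β c ≤ S / (S * q) :=
          div_le_div_of_nonneg_left hS.le hq0 (hNge β c)
      _ = 1 / q := by field_simp
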